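/- Let n be a positive natural number, let V be a real n×n matrix, let α, b ∈ ℝ^n, let B be the rank-one matrix with entries B_{jk} = b_j·α_k, let s : ℝ → ℝ be continuous, and let i : ℝ → ℝ^n (a row vector) be differentiable with i'(t) = i(t)·(s(t)·B − V) for all t. Define the scalar total force of infection ĩ(t) = i(t)·b (dot product) and the age-of-infection kernel a(u) = α·exp(−u·V)·b (row vector α times matrix exponential times column vector b). Then for all t ≥ 0, ĩ(t) = i(0)·exp(−t·V)·b + ∫_0^t s(τ)·ĩ(τ)·a(t−τ) dτ. -/

import Mathlib

open Matrix MeasureTheory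

attribute [local instance] Matrix.linftyOpNormedRing Matrix.linftyOpNormedAlgebra

/-- Renewal equation for the total force of infection of a SIR-PH-FA model with
rank-one new-infections matrix `B = b αᵀ`: if `i'(t) = i(t)·(s(t)B − V)`,
`ĩ(t) = i(t)·b` and `a(u) = α·exp(−uV)·b`, then for `t ≥ 0`,
`ĩ(t) = i(0)·exp(−tV)·b + ∫_0^t s(τ)·ĩ(τ)·a(t−τ) dτ`. -/
theorem stmt1 (n : ℕ) (hn : 0 < n) (V : Matrix (Fin n) (Fin n) ℝ)
    (α b : Fin n → ℝ)
    (B : Matrix (Fin n) (Fin n) ℝ) (hB : ∀ j k, B j k = b j * α k)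
    (s : ℝ → ℝ) (hs : Continuous s)
    (i : ℝ → Fin n → ℝ)
    (hi : ∀ t : ℝ, HasDerivAt i ((i t) ᵥ* (s t • B - V)) t)
    (itil : ℝ → ℝ) (hitil : ∀ t, itil t = i t ⬝ᵥ b)
    (a : ℝ → ℝ) (ha : ∀ u : ℝ, a u = α ⬝ᵥ (NormedSpace.exp ((-u) • V) *ᵥ b)) :
    ∀ t : ℝ, 0 ≤ t →
      itil t = ((i 0) ᵥ* NormedSpace.exp ((-t) • V)) ⬝ᵥ b +
        ∫ τ in (0:ℝ)..t, s τ * itil τ * a (t - τ) := by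
  intro t ht
  set E : ℝ → Matrix (Fin n) (Fin n) ℝ := fun u => NormedSpace.exp (u • V) with hEdef
  -- derivative of the matrix exponential
  have hEderiv : ∀ u : ℝ, HasDerivAt E (E u * V) u := fun u =>
    hasDerivAt_exp_smul_const (𝕂 := ℝ) V u
  -- continuous linear map `M ↦ M *ᵥ b`
  let L : Matrix (Fin n) (Fin n) ℝ →ₗ[ℝ] (Fin n → ℝ) :=
    { toFun := fun M => M *ᵥ b
      map_add' := fun M N => Matrix.add_mulVec M N b
      map_smul' := fun c M => Matrix.smul_mulVec c M b }
  let Lc : Matrix (Fin n) (Fin n) ℝ →L[ℝ] (Fin n → ℝ) := LinearMap.toContinuousLinearMap L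
  have hLc : ∀ M, Lc M = M *ᵥ b := fun _ => rfl
  -- the column vector `c u = exp (u • V) *ᵥ b` and its derivative
  have hcd : ∀ u : ℝ, HasDerivAt (fun u => E u *ᵥ b) ((E u * V) *ᵥ b) u := fun u =>
    Lc.hasFDerivAt.comp_hasDerivAt u (hEderiv u)
  have hcshift : ∀ τ : ℝ, HasDerivAt (fun τ => E (τ - t) *ᵥ b) ((E (τ - t) * V) *ᵥ b) τ := by
    intro τ
    have h1 : HasDerivAt (fun τ : ℝ => τ - t) 1 τ := (hasDerivAt_id τ).sub_const t
    have h2 := (hcd (τ - t)).scomp τ h1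
    rw [one_smul] at h2
    exact h2
  -- commutation of the exponential with V
  have hcomm : ∀ u : ℝ, E u * V = V * E u := fun u =>
    (((Commute.refl V).smul_left u).exp_left)
  -- B *ᵥ w = (α ⬝ᵥ w) • b
  have hBv : ∀ w : Fin n → ℝ, B *ᵥ w = (α ⬝ᵥ w) • b := by
    intro w
    funext j
    simp only [Matrix.mulVec, dotProduct, hB, Pi.smul_apply, smul_eq_mul,
      Finset.sum_mul, Finset.mul_sum]
    refine Finset.sum_congr rfl fun k _ => by ring
  -- the auxiliary function g
  set g : ℝ → ℝ := fun τ => i τ ⬝ᵥ (E (τ - t) *ᵥ b) with hgdef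
  have hg : ∀ τ : ℝ, HasDerivAt g (s τ * itil τ * a (t - τ)) τ := by
    intro τ
    have hsum : HasDerivAt (fun u => ∑ j, i u j * (E (u - t) *ᵥ b) j)
        (∑ j, ((i τ ᵥ* (s τ • B - V)) j * (E (τ - t) *ᵥ b) j
          + i τ j * ((E (τ - t) * V) *ᵥ b) j)) τ := by
      refine HasDerivAt.fun_sum fun j _ => ?_
      exact (hasDerivAt_pi.1 (hi τ) j).mul (hasDerivAt_pi.1 (hcshift τ) j)
    have hfun : g = fun u => ∑ j, i u j * (E (u - t) *ᵥ b) j := by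
      funext u; simp [hgdef, dotProduct]
    rw [hfun]
    convert hsum using 1
    -- show the derivative value equals the raw sum
    have hD : (∑ j, ((i τ ᵥ* (s τ • B - V)) j * (E (τ - t) *ᵥ b) j
        + i τ j * ((E (τ - t) * V) *ᵥ b) j))
        = (i τ ᵥ* (s τ • B - V)) ⬝ᵥ (E (τ - t) *ᵥ b) + i τ ⬝ᵥ ((E (τ - t) * V) *ᵥ b) := by
      rw [Finset.sum_add_distrib]; rfl
    rw [hD, ← dotProduct_mulVec, Matrix.mulVec_mulVec, ← dotProduct_add,
      ← Matrix.add_mulVec]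
    have hM : (s τ • B - V) * E (τ - t) + E (τ - t) * V = s τ • (B * E (τ - t)) := by
      rw [hcomm (τ - t)]
      rw [Matrix.sub_mul, Matrix.smul_mul]
      abel
    rw [hM, Matrix.smul_mulVec, ← Matrix.mulVec_mulVec, hBv,
      dotProduct_smul, dotProduct_smul]
    have hat : a (t - τ) = α ⬝ᵥ (E (τ - t) *ᵥ b) := by
      rw [ha (t - τ)]; congr 2; simp [hEdef, neg_sub]
    rw [hitil τ, hat]
    simp [smul_eq_mul]; ring
  -- continuity of the integrand
  have hicont : Continuous i := by
    rw [continuous_iff_continuousAt]; exact fun τ => (hi τ).continuousAt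
  have hitilcont : Continuous itil := by
    have : Continuous fun τ => i τ ⬝ᵥ b := by
      simp only [dotProduct]
      exact continuous_finset_sum _ fun j _ =>
        ((continuous_apply j).comp hicont).mul continuous_const
    simpa [funext hitil] using this
  have hacont : Continuous a := by
    have hexp : Continuous fun u : ℝ => NormedSpace.exp ((-u) • V) :=
      NormedSpace.exp_continuous.comp ((continuous_neg).smul continuous_const)
    have : Continuous fun u : ℝ => α ⬝ᵥ (Lc (NormedSpace.exp ((-u) • V))) := by
      simp only [dotProduct]
      exact continuous_finset_sum _ fun j _ => continuous_const.mul
        ((continuous_apply j).comp (Lc.continuous.comp hexp))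
    simpa [funext ha, hLc] using this
  have hint : IntervalIntegrable (fun τ => s τ * itil τ * a (t - τ)) volume 0 t :=
    ((hs.mul hitilcont).mul (hacont.comp (continuous_const.sub continuous_id))).intervalIntegrable 0 t
  have hftc : ∫ τ in (0:ℝ)..t, s τ * itil τ * a (t - τ) = g t - g 0 :=
    intervalIntegral.integral_eq_sub_of_hasDerivAt (fun x _ => hg x) hint
  have hgt : g t = itil t := by
    simp [hgdef, hEdef, hitil t, NormedSpace.exp_zero]
  have hg0 : g 0 = ((i 0) ᵥ* NormedSpace.exp ((-t) • V)) ⬝ᵥ b := by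
    simp only [hgdef, hEdef, zero_sub]
    rw [dotProduct_mulVec]
  rw [hftc, hgt, hg0]
  ring
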